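/- Let 1/2 < β ≤ 1, let ρ ≥ 1 be a real number, let L and t be positive integers, let C > 0, and let r₁,…,r_t ∈ {1,…,L}. Suppose that for every non-increasing sequence g : {1,…,L} → ℝ≥0 one has Σ_{i=1}^{t} r_i·g_{r_i} ≤ C·t·(Σ_{r=1}^{L} g_r²)^{1/2}. Then Σ_{i=1}^{t} min{r_i^{β}, ρ^{β}} ≤ C·t·√(2 + 1/(2β−1))·ρ^{β−1/2}. -/

import Mathlib

open Finset Real

private lemma tele_Ioc (F : ℕ → ℝ) : ∀ {a b : ℕ}, a ≤ b →
    ∑ x ∈ Finset.Ioc a b, (F x - F (x - 1)) = F b - F a := by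
  intro a b h
  induction b, h using Nat.le_induction with
  | base => simp
  | succ n hn ih =>
      rw [Finset.sum_Ioc_succ_top hn, ih]
      simp

private lemma bern {x s : ℝ} (hx : 1 ≤ x) (hs0 : 0 < s) (hs1 : s ≤ 1) :
    s * x ^ (s - 1) ≤ x ^ s - (x - 1) ^ s := by
  have hx0 : (0:ℝ) < x := lt_of_lt_of_le one_pos hx
  have h1 : (x - 1) ^ s = x ^ s * ((x - 1) / x) ^ s := by
    rw [← Real.mul_rpow hx0.le (div_nonneg (by linarith) hx0.le), mul_div_cancel₀ _ hx0.ne']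
  have he : (x - 1) / x = 1 + (-1 / x) := by field_simp; ring
  have h2 : ((x - 1) / x) ^ s ≤ 1 + s * (-1 / x) := by
    rw [he]
    apply rpow_one_add_le_one_add_mul_self _ hs0.le hs1
    rw [neg_div, neg_le_neg_iff]
    exact div_le_one_of_le₀ hx hx0.le
  have h3 : (x - 1) ^ s ≤ x ^ s * (1 + s * (-1 / x)) := by
    rw [h1]
    exact mul_le_mul_of_nonneg_left h2 (Real.rpow_nonneg hx0.le s)
  have h4 : x ^ s * (1 + s * (-1/x)) = x ^ s - s * x ^ (s-1) := by
    rw [Real.rpow_sub_one hx0.ne']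
    field_simp
    ring
  linarith [h3, h4 ▸ h3]

theorem stmt_16 (β ρ C : ℝ) (hβ1 : 1/2 < β) (hβ2 : β ≤ 1) (hρ : 1 ≤ ρ) (hC : 0 < C)
    (L t : ℕ) (hL : 0 < L) (ht : 0 < t)
    (r : Fin t → ℕ) (hr : ∀ i, r i ∈ Finset.Icc 1 L)
    (hyp : ∀ g : ℕ → ℝ, (∀ x ∈ Finset.Icc 1 L, 0 ≤ g x) →
      (∀ a b : ℕ, 1 ≤ a → a ≤ b → b ≤ L → g b ≤ g a) →
      ∑ i, (r i : ℝ) * g (r i) ≤ C * t * Real.sqrt (∑ x ∈ Finset.Icc 1 L, (g x) ^ 2)) :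
    ∑ i, min ((r i : ℝ) ^ β) (ρ ^ β)
      ≤ C * t * Real.sqrt (2 + 1 / (2 * β - 1)) * ρ ^ (β - 1/2) := by
  set s : ℝ := 2 * β - 1 with hs_def
  have hs0 : 0 < s := by simp only [hs_def]; linarith
  have hs1 : s ≤ 1 := by simp only [hs_def]; linarith
  have hρ0 : (0:ℝ) < ρ := lt_of_lt_of_le one_pos hρ
  set m : ℕ := ⌊ρ⌋₊ with hm_def
  have hm1 : 1 ≤ m := Nat.le_floor (by exact_mod_cast hρ)
  have hmρ : (m : ℝ) ≤ ρ := Nat.floor_le hρ0.le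
  have hρm : ρ < m + 1 := Nat.lt_floor_add_one ρ
  set g : ℕ → ℝ := fun x => min ((x:ℝ) ^ β) (ρ ^ β) / x with hg_def
  -- nonnegativity
  have hg0 : ∀ x ∈ Finset.Icc 1 L, 0 ≤ g x := by
    intro x hx
    simp only [Finset.mem_Icc] at hx
    have : (0:ℝ) ≤ (x:ℝ) := Nat.cast_nonneg x
    apply div_nonneg _ this
    exact le_min (Real.rpow_nonneg this β) (Real.rpow_nonneg hρ0.le β)
  -- antitone
  have hganti : ∀ a b : ℕ, 1 ≤ a → a ≤ b → b ≤ L → g b ≤ g a := by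
    intro a b ha hab _
    have ha0 : (0:ℝ) < a := by exact_mod_cast Nat.lt_of_lt_of_le Nat.zero_lt_one ha
    have hb0 : (0:ℝ) < b := lt_of_lt_of_le ha0 (by exact_mod_cast hab)
    have hab' : (a:ℝ) ≤ b := by exact_mod_cast hab
    rw [hg_def]
    rw [div_le_div_iff₀ hb0 ha0, min_mul_of_nonneg _ _ hb0.le]
    refine le_min_iff.2 ⟨?_, ?_⟩
    · calc min ((b:ℝ) ^ β) (ρ ^ β) * a ≤ (b:ℝ) ^ β * a :=
            mul_le_mul_of_nonneg_right (min_le_left _ _) ha0.le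
        _ = (a:ℝ) * (b:ℝ) * (b:ℝ) ^ (β - 1) := by
            rw [Real.rpow_sub_one hb0.ne']; field_simp
        _ ≤ (a:ℝ) * (b:ℝ) * (a:ℝ) ^ (β - 1) := by
            apply mul_le_mul_of_nonneg_left
              (Real.rpow_le_rpow_of_nonpos ha0 hab' (by linarith))
              (by positivity)
        _ = (a:ℝ) ^ β * b := by rw [Real.rpow_sub_one ha0.ne']; field_simp
    · calc min ((b:ℝ) ^ β) (ρ ^ β) * a ≤ ρ ^ β * a :=
            mul_le_mul_of_nonneg_right (min_le_right _ _) ha0.le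
        _ ≤ ρ ^ β * b := mul_le_mul_of_nonneg_left hab' (Real.rpow_nonneg hρ0.le β)
  -- value of the weighted sum
  have hval : ∀ i : Fin t, (r i : ℝ) * g (r i) = min ((r i : ℝ) ^ β) (ρ ^ β) := by
    intro i
    have h1 : 1 ≤ r i := (Finset.mem_Icc.1 (hr i)).1
    have hne : ((r i : ℕ) : ℝ) ≠ 0 := by
      simp only [ne_eq, Nat.cast_eq_zero]; omega
    simp only [hg_def]
    field_simp
  -- per-term bound for x ≥ 1
  have hterm1 : ∀ x : ℕ, 1 ≤ x →
      (g x) ^ 2 ≤ (x:ℝ) ^ s / s - ((x - 1 : ℕ):ℝ) ^ s / s := by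
    intro x hx1
    have hX1 : (1:ℝ) ≤ (x:ℝ) := by exact_mod_cast hx1
    have hX0 : (0:ℝ) < (x:ℝ) := by linarith
    have hb := bern hX1 hs0 hs1
    have hcast : ((x - 1 : ℕ):ℝ) = (x:ℝ) - 1 := by
      have := Nat.cast_sub hx1 (R := ℝ); simpa using this
    rw [hcast]
    have hgx : (g x) ^ 2 ≤ ((x:ℝ) ^ (β - 1)) ^ 2 := by
      have h0 : 0 ≤ g x := by
        apply div_nonneg _ hX0.le
        exact le_min (Real.rpow_nonneg hX0.le β) (Real.rpow_nonneg hρ0.le β)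
      have h2 : g x ≤ (x:ℝ) ^ (β - 1) := by
        rw [Real.rpow_sub_one hX0.ne']
        exact div_le_div_of_nonneg_right (min_le_left _ _) hX0.le |>.trans_eq rfl
      exact pow_le_pow_left₀ h0 h2 2
    have hsq' : ((x:ℝ) ^ (β - 1)) ^ 2 = (x:ℝ) ^ (s - 1) := by
      rw [sq, ← Real.rpow_add hX0]
      congr 1
      simp only [hs_def]; ring
    calc (g x) ^ 2 ≤ (x:ℝ) ^ (s - 1) := hgx.trans_eq hsq'
      _ ≤ ((x:ℝ) ^ s - ((x:ℝ) - 1) ^ s) / s := by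
          rw [le_div_iff₀ hs0, mul_comm]; exact hb
      _ = (x:ℝ) ^ s / s - ((x:ℝ) - 1) ^ s / s := by ring
  -- per-term bound for x > m
  have hterm2 : ∀ x : ℕ, m < x →
      (g x) ^ 2 ≤ (-(ρ ^ (1 + s)) / (x:ℝ)) - (-(ρ ^ (1 + s)) / ((x - 1 : ℕ):ℝ)) := by
    intro x hmx
    have hx2 : 2 ≤ x := by omega
    have hX2 : (2:ℝ) ≤ (x:ℝ) := by exact_mod_cast hx2
    have hX0 : (0:ℝ) < (x:ℝ) := by linarith
    have hcast : ((x - 1 : ℕ):ℝ) = (x:ℝ) - 1 := by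
      have := Nat.cast_sub (by omega : 1 ≤ x) (R := ℝ); simpa using this
    rw [hcast]
    have hXm1 : (0:ℝ) < (x:ℝ) - 1 := by linarith
    have hgx : (g x) ^ 2 ≤ (ρ ^ β / (x:ℝ)) ^ 2 := by
      have h0 : 0 ≤ g x := by
        apply div_nonneg _ hX0.le
        exact le_min (Real.rpow_nonneg hX0.le β) (Real.rpow_nonneg hρ0.le β)
      have h2 : g x ≤ ρ ^ β / (x:ℝ) :=
        div_le_div_of_nonneg_right (min_le_right _ _) hX0.le |>.trans_eq rfl
      exact pow_le_pow_left₀ h0 h2 2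
    have hsq' : (ρ ^ β / (x:ℝ)) ^ 2 = ρ ^ (1 + s) / ((x:ℝ) * (x:ℝ)) := by
      rw [div_pow, sq, sq, ← Real.rpow_add hρ0]
      congr 2
      simp only [hs_def]; ring
    have hρs : (0:ℝ) ≤ ρ ^ (1 + s) := Real.rpow_nonneg hρ0.le _
    calc (g x) ^ 2 ≤ ρ ^ (1 + s) / ((x:ℝ) * (x:ℝ)) := hgx.trans_eq hsq'
      _ ≤ ρ ^ (1 + s) / (((x:ℝ) - 1) * (x:ℝ)) := by
          apply div_le_div_of_nonneg_left hρs (by nlinarith) (by nlinarith)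
      _ = (-(ρ ^ (1 + s)) / (x:ℝ)) - (-(ρ ^ (1 + s)) / ((x:ℝ) - 1)) := by
          field_simp
          ring
  -- bound on the sum of squares
  have hρs0 : (0:ℝ) ≤ ρ ^ s := Real.rpow_nonneg hρ0.le s
  have hsq : ∑ x ∈ Finset.Icc 1 L, (g x) ^ 2 ≤ (2 + 1 / s) * ρ ^ s := by
    have hIcc : Finset.Icc 1 L = Finset.Ioc 0 L := Finset.Icc_add_one_left_eq_Ioc 0 L
    rw [hIcc]
    rcases le_or_gt L m with hLm | hmL
    · calc ∑ x ∈ Finset.Ioc 0 L, (g x) ^ 2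
          ≤ ∑ x ∈ Finset.Ioc 0 L, ((x:ℝ) ^ s / s - ((x - 1 : ℕ):ℝ) ^ s / s) := by
            apply Finset.sum_le_sum
            intro x hx
            exact hterm1 x (Finset.mem_Ioc.1 hx).1
        _ = (L:ℝ) ^ s / s - ((0:ℕ):ℝ) ^ s / s := tele_Ioc (fun n => (n:ℝ) ^ s / s) (Nat.zero_le L)
        _ = (L:ℝ) ^ s / s := by
            simp [Real.zero_rpow hs0.ne']
        _ ≤ ρ ^ s / s := by
            apply div_le_div_of_nonneg_right _ hs0.le |>.trans_eq rfl
            apply Real.rpow_le_rpow (Nat.cast_nonneg L) _ hs0.le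
            calc (L:ℝ) ≤ (m:ℝ) := by exact_mod_cast hLm
              _ ≤ ρ := hmρ
        _ ≤ (2 + 1 / s) * ρ ^ s := by
            rw [div_eq_mul_one_div, mul_comm]
            nlinarith [hρs0]
    · rw [← Finset.sum_Ioc_consecutive _ (Nat.zero_le m) hmL.le]
      have hb1 : ∑ x ∈ Finset.Ioc 0 m, (g x) ^ 2 ≤ ρ ^ s / s := by
        calc ∑ x ∈ Finset.Ioc 0 m, (g x) ^ 2
            ≤ ∑ x ∈ Finset.Ioc 0 m, ((x:ℝ) ^ s / s - ((x - 1 : ℕ):ℝ) ^ s / s) := by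
              apply Finset.sum_le_sum
              intro x hx
              exact hterm1 x (Finset.mem_Ioc.1 hx).1
          _ = (m:ℝ) ^ s / s - ((0:ℕ):ℝ) ^ s / s := tele_Ioc (fun n => (n:ℝ) ^ s / s) (Nat.zero_le m)
          _ = (m:ℝ) ^ s / s := by simp [Real.zero_rpow hs0.ne']
          _ ≤ ρ ^ s / s := by
              apply div_le_div_of_nonneg_right _ hs0.le |>.trans_eq rfl
              exact Real.rpow_le_rpow (Nat.cast_nonneg m) hmρ hs0.le
      have hb2 : ∑ x ∈ Finset.Ioc m L, (g x) ^ 2 ≤ 2 * ρ ^ s := by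
        have hm0 : (0:ℝ) < (m:ℝ) := by exact_mod_cast hm1
        have hL0 : (0:ℝ) < (L:ℝ) := by exact_mod_cast hL
        have hρs : (0:ℝ) ≤ ρ ^ (1 + s) := Real.rpow_nonneg hρ0.le _
        calc ∑ x ∈ Finset.Ioc m L, (g x) ^ 2
            ≤ ∑ x ∈ Finset.Ioc m L, ((-(ρ ^ (1 + s)) / (x:ℝ)) - (-(ρ ^ (1 + s)) / ((x - 1 : ℕ):ℝ))) := by
              apply Finset.sum_le_sum
              intro x hx
              exact hterm2 x (Finset.mem_Ioc.1 hx).1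
          _ = (-(ρ ^ (1 + s)) / (L:ℝ)) - (-(ρ ^ (1 + s)) / (m:ℝ)) :=
              tele_Ioc (fun n => -(ρ ^ (1 + s)) / (n:ℝ)) hmL.le
          _ ≤ ρ ^ (1 + s) / (m:ℝ) := by
              have : (0:ℝ) ≤ ρ ^ (1 + s) / (L:ℝ) := div_nonneg hρs hL0.le
              rw [neg_div, neg_div]
              linarith
          _ ≤ 2 * ρ ^ s := by
              rw [div_le_iff₀ hm0]
              have he : ρ ^ (1 + s) = ρ * ρ ^ s := by
                rw [Real.rpow_add hρ0, Real.rpow_one]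
              rw [he]
              have hρ2m : ρ ≤ 2 * (m:ℝ) := by
                have : (1:ℝ) ≤ (m:ℝ) := by exact_mod_cast hm1
                linarith
              nlinarith [hρs0]
      calc ∑ x ∈ Finset.Ioc 0 m, (g x) ^ 2 + ∑ x ∈ Finset.Ioc m L, (g x) ^ 2
          ≤ ρ ^ s / s + 2 * ρ ^ s := add_le_add hb1 hb2
        _ = (2 + 1 / s) * ρ ^ s := by ring
  -- conclude
  have key := hyp g hg0 hganti
  have hLHS : ∑ i, min ((r i : ℝ) ^ β) (ρ ^ β) = ∑ i, (r i : ℝ) * g (r i) :=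
    Finset.sum_congr rfl (fun i _ => (hval i).symm)
  rw [hLHS]
  refine key.trans ?_
  have hfin : Real.sqrt (∑ x ∈ Finset.Icc 1 L, (g x) ^ 2)
      ≤ Real.sqrt (2 + 1 / s) * ρ ^ (β - 1/2) := by
    calc Real.sqrt (∑ x ∈ Finset.Icc 1 L, (g x) ^ 2)
        ≤ Real.sqrt ((2 + 1 / s) * ρ ^ s) := Real.sqrt_le_sqrt hsq
      _ = Real.sqrt (2 + 1 / s) * ρ ^ (β - 1/2) := by
          rw [Real.sqrt_mul (by positivity), Real.sqrt_eq_rpow (ρ ^ s), ← Real.rpow_mul hρ0.le]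
          congr 1
          simp only [hs_def]; ring
  calc C * (t:ℝ) * Real.sqrt (∑ x ∈ Finset.Icc 1 L, (g x) ^ 2)
      ≤ C * (t:ℝ) * (Real.sqrt (2 + 1 / s) * ρ ^ (β - 1/2)) :=
        mul_le_mul_of_nonneg_left hfin (by positivity)
    _ = C * (t:ℝ) * Real.sqrt (2 + 1 / s) * ρ ^ (β - 1/2) := by ring
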